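/- For every q ≥ 1 and every 𝐧 ∈ ℕ^q_*, and every integer partition λ of |𝐧|, the sum of the multinomial coefficients M_𝐧(A) over all q-colored partitions A of 𝐧 with shape(A) = λ equals the multinomial coefficient of the second kind M₂(λ) = |𝐧|! ∏_i 1/(i^{λ_i} λ_i!). -/

import Mathlib

open Finset Nat
open scoped Classical

/-- `col(A) = ∑_𝐚 A(𝐚) • 𝐚`, the color count vector of a colored partition. -/
def colA {q : ℕ} (A : (Fin q → ℕ) →₀ ℕ) : Fin q → ℕ :=
  fun j => ∑ a ∈ A.support, A a * a j

/-- The set of `q`-colored partitions of `𝐧`. -/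
def CPartSet {q : ℕ} (n : Fin q → ℕ) : Set ((Fin q → ℕ) →₀ ℕ) :=
  {A | A 0 = 0 ∧ colA A = n}

/-- The multinomial coefficient `M_𝐧(A)` of a colored partition `A ⊨ 𝐧`. -/
noncomputable def Mcoef {q : ℕ} (n : Fin q → ℕ) (A : (Fin q → ℕ) →₀ ℕ) : ℝ :=
  (∏ j, (n j)! : ℝ) *
    ∏ a ∈ A.support,
      ((Nat.multinomial Finset.univ a : ℝ) ^ A a / ((∑ j, a j : ℝ) ^ A a * (A a)!))

/-- `shape(A)_i`: the number of parts of `A` of total size `i`. -/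
def shapeA {q : ℕ} (A : (Fin q → ℕ) →₀ ℕ) (i : ℕ) : ℕ :=
  ∑ a ∈ A.support.filter fun a => (∑ j, a j) = i, A a

section Aux

open MvPolynomial

/-- Parts of total size `i`. -/
def Tt (q i : ℕ) : Finset (Fin q → ℕ) := Finset.piAntidiag Finset.univ i

lemma mem_Tt {q i : ℕ} {a : Fin q → ℕ} : a ∈ Tt q i ↔ ∑ j, a j = i := by simp [Tt]

noncomputable def Ss (q : ℕ) : MvPolynomial (Fin q) ℝ := ∑ j, X j

lemma prod_monomial {ι σ : Type*} (s : Finset ι) (g : ι → (σ →₀ ℕ)) (b : ι → ℝ) :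
    ∏ a ∈ s, (monomial (g a) (b a) : MvPolynomial σ ℝ)
      = monomial (∑ a ∈ s, g a) (∏ a ∈ s, b a) := by
  classical
  induction s using Finset.cons_induction with
  | empty => simp [monomial_zero']
  | cons a s ha ih => rw [prod_cons, ih, monomial_mul, Finset.sum_cons, Finset.prod_cons]

lemma L1 (q i : ℕ) : Ss q ^ i
    = ∑ a ∈ Tt q i, monomial (Finsupp.equivFunOnFinite.symm a)
        ((Nat.multinomial Finset.univ a : ℝ)) := by
  rw [Ss, Finset.sum_pow_eq_sum_piAntidiag]
  refine Finset.sum_congr rfl fun a _ => ?_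
  rw [monomial_eq]
  simp only [Finsupp.prod_fintype _ (fun j e => (X j : MvPolynomial (Fin q) ℝ) ^ e) (fun j => pow_zero (X j)),
    Finsupp.coe_equivFunOnFinite_symm]
  rw [C_eq_coe_nat, mul_comm]

noncomputable def KSet (q N : ℕ) (l : ℕ → ℕ) :
    Finset (Π i ∈ Finset.Icc 1 N, (Fin q → ℕ) → ℕ) :=
  (Finset.Icc 1 N).pi fun i => Finset.piAntidiag (Tt q i) (l i)

noncomputable def muK (q N : ℕ) (K : Π i ∈ Finset.Icc 1 N, (Fin q → ℕ) → ℕ) : Fin q →₀ ℕ :=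
  ∑ i ∈ (Finset.Icc 1 N).attach, ∑ a ∈ Tt q i.1,
    K i.1 i.2 a • Finsupp.equivFunOnFinite.symm a

noncomputable def cK (q N : ℕ) (K : Π i ∈ Finset.Icc 1 N, (Fin q → ℕ) → ℕ) : ℝ :=
  ∏ i ∈ (Finset.Icc 1 N).attach,
    ((Nat.multinomial (Tt q i.1) (K i.1 i.2) : ℝ) *
      ∏ a ∈ Tt q i.1, (Nat.multinomial Finset.univ a : ℝ) ^ (K i.1 i.2 a))

lemma L3a (q i m : ℕ) : (Ss q ^ i) ^ m
    = ∑ k ∈ Finset.piAntidiag (Tt q i) m,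
        monomial (∑ a ∈ Tt q i, k a • Finsupp.equivFunOnFinite.symm a)
          ((Nat.multinomial (Tt q i) k : ℝ) *
            ∏ a ∈ Tt q i, (Nat.multinomial Finset.univ a : ℝ) ^ k a) := by
  rw [L1, Finset.sum_pow_eq_sum_piAntidiag]
  refine Finset.sum_congr rfl fun k _ => ?_
  simp_rw [monomial_pow]
  rw [prod_monomial, ← C_eq_coe_nat, C_mul_monomial]

lemma L3 (q N : ℕ) (l : ℕ → ℕ) :
    ∏ i ∈ Finset.Icc 1 N, (Ss q ^ i) ^ (l i)
      = ∑ K ∈ KSet q N l, monomial (muK q N K) (cK q N K) := by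
  simp_rw [L3a]
  rw [Finset.prod_sum]
  refine Finset.sum_congr rfl fun K _ => ?_
  rw [prod_monomial]
  rfl

lemma L4 (q N : ℕ) (l : ℕ → ℕ) (hl2 : ∑ i ∈ Finset.Icc 1 N, i * l i = N) :
    ∏ i ∈ Finset.Icc 1 N, (Ss q ^ i) ^ (l i) = Ss q ^ N := by
  simp_rw [← pow_mul]
  rw [Finset.prod_pow_eq_pow_sum, hl2]

lemma identity1 {q N : ℕ} {n : Fin q → ℕ} (hn : ∑ j, n j = N) (l : ℕ → ℕ)
    (hl2 : ∑ i ∈ Finset.Icc 1 N, i * l i = N) :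
    (Nat.multinomial Finset.univ n : ℝ)
      = ∑ K ∈ KSet q N l,
          if Finsupp.equivFunOnFinite.symm n = muK q N K then cK q N K else 0 := by
  have h2 : MvPolynomial.coeff (Finsupp.equivFunOnFinite.symm n) (Ss q ^ N)
      = (Nat.multinomial Finset.univ n : ℝ) := by
    rw [L1, MvPolynomial.coeff_sum]
    rw [Finset.sum_eq_single n]
    · simp
    · intro b _ hbn
      rw [coeff_monomial, if_neg]
      exact fun h => hbn (Finsupp.equivFunOnFinite.symm.injective h)
    · intro h
      exact absurd (mem_Tt.2 hn) h
  rw [← h2, ← L4 q N l hl2, L3, MvPolynomial.coeff_sum]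
  simp_rw [coeff_monomial, eq_comm]

/-! ### The map `Φ` from tuples to colored partitions -/

noncomputable def Phi (q N : ℕ) (K : Π i ∈ Finset.Icc 1 N, (Fin q → ℕ) → ℕ) :
    (Fin q → ℕ) →₀ ℕ :=
  Finsupp.onFinset ((Finset.Icc 1 N).biUnion (Tt q))
    (fun a => if h : (∑ j, a j) ∈ Finset.Icc 1 N then K (∑ j, a j) h a else 0)
    (fun a ha => by
      rw [Finset.mem_biUnion]
      by_cases h : (∑ j, a j) ∈ Finset.Icc 1 N
      · exact ⟨_, h, mem_Tt.2 rfl⟩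
      · simp [h] at ha)

lemma Phi_apply_mem {q N : ℕ} (K : Π i ∈ Finset.Icc 1 N, (Fin q → ℕ) → ℕ)
    {a : Fin q → ℕ} (h : (∑ j, a j) ∈ Finset.Icc 1 N) :
    Phi q N K a = K (∑ j, a j) h a := dif_pos h

lemma Phi_apply_not_mem {q N : ℕ} (K : Π i ∈ Finset.Icc 1 N, (Fin q → ℕ) → ℕ)
    {a : Fin q → ℕ} (h : (∑ j, a j) ∉ Finset.Icc 1 N) :
    Phi q N K a = 0 := dif_neg h

lemma Phi_apply_Tt {q N : ℕ} (K : Π i ∈ Finset.Icc 1 N, (Fin q → ℕ) → ℕ)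
    {i : ℕ} (hi : i ∈ Finset.Icc 1 N) {a : Fin q → ℕ} (ha : a ∈ Tt q i) :
    Phi q N K a = K i hi a := by
  obtain rfl : ∑ j, a j = i := mem_Tt.1 ha
  exact Phi_apply_mem K hi

lemma support_Phi_subset {q N : ℕ} (K : Π i ∈ Finset.Icc 1 N, (Fin q → ℕ) → ℕ) :
    (Phi q N K).support ⊆ (Finset.Icc 1 N).biUnion (Tt q) :=
  Finsupp.support_onFinset_subset

lemma Tt_pairwiseDisjoint (q N : ℕ) :
    (↑(Finset.Icc 1 N) : Set ℕ).PairwiseDisjoint (Tt q) := by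
  intro i _ j _ hij
  simp only [Finset.disjoint_left]
  intro a ha ha'
  exact hij ((mem_Tt.1 ha).symm.trans (mem_Tt.1 ha'))

lemma mem_KSet {q N : ℕ} {l : ℕ → ℕ} {K : Π i ∈ Finset.Icc 1 N, (Fin q → ℕ) → ℕ}
    (hK : K ∈ KSet q N l) {i : ℕ} (hi : i ∈ Finset.Icc 1 N) :
    (∑ a ∈ Tt q i, K i hi a = l i) ∧ ∀ a, K i hi a ≠ 0 → a ∈ Tt q i := by
  have := Finset.mem_pi.1 hK i hi
  rw [Finset.mem_piAntidiag] at this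
  exact this

lemma colA_Phi {q N : ℕ} {l : ℕ → ℕ} {K : Π i ∈ Finset.Icc 1 N, (Fin q → ℕ) → ℕ}
    (hK : K ∈ KSet q N l) :
    colA (Phi q N K) = Finsupp.equivFunOnFinite (muK q N K) := by
  funext j
  have hR : Finsupp.equivFunOnFinite (muK q N K) j
      = ∑ i ∈ (Finset.Icc 1 N).attach, ∑ a ∈ Tt q i.1, Phi q N K a * a j := by
    rw [muK, Finsupp.equivFunOnFinite_apply, Finsupp.finset_sum_apply]
    refine Finset.sum_congr rfl fun i _ => ?_
    rw [Finsupp.finset_sum_apply]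
    refine Finset.sum_congr rfl fun a ha => ?_
    rw [Finsupp.smul_apply, Phi_apply_Tt K i.2 ha, smul_eq_mul,
      Finsupp.coe_equivFunOnFinite_symm]
  rw [hR]
  show ∑ a ∈ (Phi q N K).support, Phi q N K a * a j = _
  rw [Finset.sum_subset (support_Phi_subset K) (fun a _ ha => by
        rw [Finsupp.notMem_support_iff.1 ha, zero_mul])]
  rw [Finset.sum_biUnion (Tt_pairwiseDisjoint q N)]
  rw [← Finset.sum_attach (Finset.Icc 1 N) (fun i => ∑ a ∈ Tt q i, Phi q N K a * a j)]

lemma shape_Phi {q N : ℕ} {l : ℕ → ℕ} (hl : ∀ i, l i ≠ 0 → 1 ≤ i ∧ i ≤ N)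
    {K : Π i ∈ Finset.Icc 1 N, (Fin q → ℕ) → ℕ} (hK : K ∈ KSet q N l) :
    ∀ i, shapeA (Phi q N K) i = l i := by
  intro i
  by_cases hi : i ∈ Finset.Icc 1 N
  · rw [shapeA]
    rw [Finset.sum_subset (fun a ha => mem_Tt.2 (Finset.mem_filter.1 ha).2)
      (fun a ha hna => by
        by_contra hc
        exact hna (Finset.mem_filter.2 ⟨Finsupp.mem_support_iff.2 hc, mem_Tt.1 ha⟩))]
    rw [Finset.sum_congr rfl (fun a ha => Phi_apply_Tt K hi ha)]
    exact (mem_KSet hK hi).1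
  · have hli : l i = 0 := by
      by_contra h
      exact hi (Finset.mem_Icc.2 (hl i h))
    rw [hli, shapeA, Finset.filter_false_of_mem, Finset.sum_empty]
    intro a ha hsum
    have hmem := support_Phi_subset K ha
    rw [Finset.mem_biUnion] at hmem
    obtain ⟨i', hi', hti⟩ := hmem
    have : i = i' := hsum.symm.trans (mem_Tt.1 hti)
    exact hi (this ▸ hi')

lemma Phi_zero {q N : ℕ} (K : Π i ∈ Finset.Icc 1 N, (Fin q → ℕ) → ℕ) :
    Phi q N K 0 = 0 := by
  apply Phi_apply_not_mem
  simp

lemma cK_eq {q N : ℕ} {l : ℕ → ℕ} {K : Π i ∈ Finset.Icc 1 N, (Fin q → ℕ) → ℕ}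
    (hK : K ∈ KSet q N l) :
    cK q N K = (∏ i ∈ Finset.Icc 1 N, ((l i)! : ℝ)) *
      ∏ a ∈ (Phi q N K).support,
        ((Nat.multinomial Finset.univ a : ℝ) ^ (Phi q N K a) / ((Phi q N K a)!)) := by
  have step1 : ∀ (i) (hi : i ∈ Finset.Icc 1 N),
      (Nat.multinomial (Tt q i) (K i hi) : ℝ)
        = ((l i)! : ℝ) / ∏ a ∈ Tt q i, ((K i hi a)! : ℝ) := by
    intro i hi
    have hspec := Nat.multinomial_spec (Tt q i) (K i hi)
    rw [(mem_KSet hK hi).1] at hspec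
    rw [eq_div_iff (Finset.prod_ne_zero_iff.2 fun a _ =>
      Nat.cast_ne_zero.2 (Nat.factorial_ne_zero _))]
    rw [mul_comm]
    exact_mod_cast hspec
  rw [cK]
  calc ∏ i ∈ (Finset.Icc 1 N).attach,
        ((Nat.multinomial (Tt q i.1) (K i.1 i.2) : ℝ) *
          ∏ a ∈ Tt q i.1, (Nat.multinomial Finset.univ a : ℝ) ^ (K i.1 i.2 a))
      = ∏ i ∈ (Finset.Icc 1 N).attach, (((l i.1)! : ℝ) *
          ∏ a ∈ Tt q i.1,
            ((Nat.multinomial Finset.univ a : ℝ) ^ (Phi q N K a) / ((Phi q N K a)!))) := by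
        refine Finset.prod_congr rfl fun i _ => ?_
        rw [step1 i.1 i.2, div_mul_eq_mul_div, mul_div_assoc, ← Finset.prod_div_distrib]
        congr 1
        refine Finset.prod_congr rfl fun a ha => ?_
        rw [Phi_apply_Tt K i.2 ha]
    _ = (∏ i ∈ Finset.Icc 1 N, ((l i)! : ℝ)) *
          ∏ a ∈ (Phi q N K).support,
            ((Nat.multinomial Finset.univ a : ℝ) ^ (Phi q N K a) / ((Phi q N K a)!)) := by
        rw [Finset.prod_mul_distrib]
        congr 1
        · exact Finset.prod_attach (Finset.Icc 1 N) (fun i => ((l i)! : ℝ))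
        · rw [Finset.prod_attach (Finset.Icc 1 N) (fun i => ∏ a ∈ Tt q i,
            ((Nat.multinomial Finset.univ a : ℝ) ^ (Phi q N K a) / ((Phi q N K a)!)))]
          rw [← Finset.prod_biUnion (Tt_pairwiseDisjoint q N)]
          refine (Finset.prod_subset (support_Phi_subset K) (fun a _ ha => ?_)).symm
          rw [Finsupp.notMem_support_iff.1 ha]
          simp

lemma Phi_inj {q N : ℕ} {l : ℕ → ℕ} {K₁ K₂ : Π i ∈ Finset.Icc 1 N, (Fin q → ℕ) → ℕ}
    (h₁ : K₁ ∈ KSet q N l) (h₂ : K₂ ∈ KSet q N l) (h : Phi q N K₁ = Phi q N K₂) :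
    K₁ = K₂ := by
  funext i hi a
  by_cases ha : a ∈ Tt q i
  · rw [← Phi_apply_Tt K₁ hi ha, ← Phi_apply_Tt K₂ hi ha, h]
  · rw [not_imp_comm.1 ((mem_KSet h₁ hi).2 a) ha,
      not_imp_comm.1 ((mem_KSet h₂ hi).2 a) ha]

lemma supp_size {q N : ℕ} {n : Fin q → ℕ} (hN : ∑ j, n j = N)
    {A : (Fin q → ℕ) →₀ ℕ} (h0 : A 0 = 0) (hcol : colA A = n) :
    ∀ a ∈ A.support, (∑ j, a j) ∈ Finset.Icc 1 N := by
  intro a ha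
  have hA : A a ≠ 0 := Finsupp.mem_support_iff.1 ha
  refine Finset.mem_Icc.2 ⟨?_, ?_⟩
  · rw [Nat.one_le_iff_ne_zero]
    intro hs
    have haz : a = 0 := funext fun j => (Finset.sum_eq_zero_iff.1 hs) j (Finset.mem_univ j)
    exact hA (haz ▸ h0)
  · rw [← hN]
    refine Finset.sum_le_sum fun j _ => ?_
    calc a j ≤ A a * a j := Nat.le_mul_of_pos_left _ (Nat.pos_of_ne_zero hA)
      _ ≤ ∑ b ∈ A.support, A b * b j :=
          Finset.single_le_sum (f := fun b => A b * b j) (fun b _ => Nat.zero_le _) ha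
      _ = n j := congrFun hcol j

lemma Phi_surj {q N : ℕ} {n : Fin q → ℕ} (hN : ∑ j, n j = N) {l : ℕ → ℕ}
    {A : (Fin q → ℕ) →₀ ℕ} (h0 : A 0 = 0) (hcol : colA A = n)
    (hsh : ∀ i, shapeA A i = l i) :
    ∃ K ∈ KSet q N l, Phi q N K = A := by
  refine ⟨fun i _ a => if a ∈ Tt q i then A a else 0, ?_, ?_⟩
  · rw [KSet, Finset.mem_pi]
    intro i hi
    rw [Finset.mem_piAntidiag]
    constructor
    · rw [Finset.sum_congr rfl (fun a ha => if_pos ha)]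
      rw [← hsh i, shapeA]
      refine (Finset.sum_subset (fun a ha => mem_Tt.2 (Finset.mem_filter.1 ha).2)
        (fun a ha hna => ?_)).symm
      by_contra hc
      exact hna (Finset.mem_filter.2 ⟨Finsupp.mem_support_iff.2 hc, mem_Tt.1 ha⟩)
    · intro a h
      by_contra hc
      rw [if_neg hc] at h
      exact h rfl
  · ext a
    by_cases h : (∑ j, a j) ∈ Finset.Icc 1 N
    · rw [Phi_apply_mem _ h, if_pos (mem_Tt.2 rfl)]
    · rw [Phi_apply_not_mem _ h]
      symm
      by_contra hc
      exact h (supp_size hN h0 hcol a (Finsupp.mem_support_iff.2 hc))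

end Aux

theorem sum_Mcoef_over_shape (q : ℕ) (hq : 1 ≤ q) (n : Fin q → ℕ) (hn : n ≠ 0)
    (l : ℕ → ℕ) (hl : ∀ i, l i ≠ 0 → 1 ≤ i ∧ i ≤ ∑ j, n j)
    (hl2 : ∑ i ∈ Finset.Icc 1 (∑ j, n j), i * l i = ∑ j, n j) :
    ∑ᶠ A ∈ {A : (Fin q → ℕ) →₀ ℕ | A ∈ CPartSet n ∧ ∀ i, shapeA A i = l i},
      Mcoef n A =
      ((∑ j, n j)! : ℝ) *
        ∏ i ∈ Finset.Icc 1 (∑ j, n j), 1 / ((i : ℝ) ^ l i * (l i)!) := by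
  classical
  set N := ∑ j, n j with hN
  set F := (KSet q N l).filter
      (fun K => Finsupp.equivFunOnFinite.symm n = muK q N K) with hF
  have key : ∀ K ∈ KSet q N l,
      (Finsupp.equivFunOnFinite.symm n = muK q N K) ↔ colA (Phi q N K) = n := by
    intro K hK
    rw [colA_Phi hK, Equiv.symm_apply_eq, eq_comm]
  have hset : {A : (Fin q → ℕ) →₀ ℕ | A ∈ CPartSet n ∧ ∀ i, shapeA A i = l i}
      = ↑(F.image (Phi q N)) := by
    ext A
    simp only [Set.mem_setOf_eq, Finset.coe_image, Set.mem_image, Finset.mem_coe,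
      Finset.mem_filter, hF, CPartSet, Set.mem_setOf_eq]
    constructor
    · rintro ⟨⟨h0, hcol⟩, hsh⟩
      obtain ⟨K, hK, rfl⟩ := Phi_surj rfl h0 hcol hsh
      exact ⟨K, ⟨hK, (key K hK).2 hcol⟩, rfl⟩
    · rintro ⟨K, ⟨hK, hmu⟩, rfl⟩
      exact ⟨⟨Phi_zero K, (key K hK).1 hmu⟩, shape_Phi hl hK⟩
  rw [hset, finsum_mem_coe_finset,
    Finset.sum_image (fun x hx y hy hxy =>
      Phi_inj (Finset.mem_filter.1 hx).1 (Finset.mem_filter.1 hy).1 hxy)]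
  have hMc : ∀ K ∈ F, Mcoef n (Phi q N K)
      = ((∏ j, ((n j)! : ℝ)) * ∏ i ∈ Finset.Icc 1 N, ((1:ℝ)/i)^(l i)) *
        (cK q N K / ∏ i ∈ Finset.Icc 1 N, ((l i)! : ℝ)) := by
    intro K hKF
    obtain ⟨hK, hmu⟩ := Finset.mem_filter.1 hKF
    have hcol : colA (Phi q N K) = n := (key K hK).1 hmu
    have hsh := shape_Phi hl hK
    rw [Mcoef, cK_eq hK]
    have hsplit : ∏ a ∈ (Phi q N K).support,
          ((Nat.multinomial Finset.univ a : ℝ) ^ (Phi q N K a) /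
            ((∑ j, a j : ℝ) ^ (Phi q N K a) * ((Phi q N K a)!)))
        = (∏ a ∈ (Phi q N K).support, ((1:ℝ)/(∑ j, a j))^(Phi q N K a)) *
          ∏ a ∈ (Phi q N K).support,
            ((Nat.multinomial Finset.univ a : ℝ) ^ (Phi q N K a) / ((Phi q N K a)!)) := by
      rw [← Finset.prod_mul_distrib]
      refine Finset.prod_congr rfl fun a _ => ?_
      push_cast
      ring
    have hfib : ∏ a ∈ (Phi q N K).support, ((1:ℝ)/(∑ j, a j))^(Phi q N K a)
        = ∏ i ∈ Finset.Icc 1 N, ((1:ℝ)/i)^(l i) := by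
      rw [← Finset.prod_fiberwise_of_maps_to (g := fun a => ∑ j, a j)
        (supp_size rfl (Phi_zero K) hcol)
        (fun a => ((1:ℝ)/(∑ j, a j))^(Phi q N K a))]
      refine Finset.prod_congr rfl fun i hi => ?_
      rw [Finset.prod_congr rfl (fun a ha => by
        rw [(Finset.mem_filter.1 ha).2] :
          ∀ a ∈ (Phi q N K).support.filter (fun a => (∑ j, a j) = i),
            ((1:ℝ)/(∑ j, a j))^(Phi q N K a) = ((1:ℝ)/i)^(Phi q N K a))]
      rw [Finset.prod_pow_eq_pow_sum]
      congr 1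
      exact hsh i
    have hne : (∏ i ∈ Finset.Icc 1 N, ((l i)! : ℝ)) ≠ 0 :=
      Finset.prod_ne_zero_iff.2 fun i _ => Nat.cast_ne_zero.2 (Nat.factorial_ne_zero _)
    rw [hsplit, hfib, mul_div_cancel_left₀ _ hne]
    ring
  rw [Finset.sum_congr rfl hMc, ← Finset.mul_sum, ← Finset.sum_div]
  have hsumc : ∑ K ∈ F, cK q N K = (Nat.multinomial Finset.univ n : ℝ) := by
    rw [hF, Finset.sum_filter]
    exact (identity1 rfl l hl2).symm
  rw [hsumc]
  have hmn : (∏ j, ((n j)! : ℝ)) * (Nat.multinomial Finset.univ n : ℝ) = ((N)! : ℝ) := by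
    exact_mod_cast congrArg (Nat.cast : ℕ → ℝ) (Nat.multinomial_spec Finset.univ n)
  have h1 : ∀ i ∈ Finset.Icc 1 N, (1:ℝ)/((i:ℝ)^(l i) * (l i)!)
      = ((1:ℝ)/i)^(l i) * ((1:ℝ)/(l i)!) := fun i _ => by
    ring
  rw [Finset.prod_congr rfl h1, Finset.prod_mul_distrib, ← hmn]
  have h2 : ∏ i ∈ Finset.Icc 1 N, ((1:ℝ)/((l i)! : ℝ))
      = 1/∏ i ∈ Finset.Icc 1 N, ((l i)! : ℝ) := by
    rw [one_div, ← Finset.prod_inv_distrib]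
    simp [one_div]
  rw [h2]
  field_simp
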